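/- arXiv:1705.08581 — 4 statements merged into one kernel-verified Lean document; each statement's English description precedes it below -/
import Mathlib

section
/- For real a, b with 0 < a, 0 < b, a + b < 2 and a + b ≠ 1, the integral ∫₀¹ x^{-a-b} [ (1-x)^{a-1} − (1-x)^{b-1} ] dx converges and equals ((1-b)/(1-a-b)) · Γ(2-a-b)Γ(a)/Γ(2-b) − ((1-a)/(1-a-b)) · Γ(2-a-b)Γ(b)/Γ(2-a). -/
open MeasureTheory Set

private lemma rpow_le_max {m t q : ℝ} (hm : 0 < m) (h1 : m ≤ t) (h2 : t ≤ 1) :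
    t ^ q ≤ max 1 (m ^ q) := by
  rcases le_or_gt 0 q with hq | hq
  · exact le_max_of_le_left (Real.rpow_le_one (hm.le.trans h1) h2 hq)
  · exact le_max_of_le_right (Real.rpow_le_rpow_of_nonpos hm h1 hq.le)

private lemma one_sub_deriv (c : ℝ) {x : ℝ} (hx : x ≠ 1) :
    HasDerivAt (fun x : ℝ => (1-x) ^ c) (-(c * (1-x)^(c-1))) x := by
  have h1 : (1:ℝ) - x ≠ 0 := sub_ne_zero.mpr (Ne.symm hx)
  have h := Real.hasDerivAt_rpow_const (x := 1 - x) (p := c) (Or.inl h1)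
  have h2 : HasDerivAt (fun x : ℝ => 1 - x) (-1) x := (hasDerivAt_id x).const_sub 1
  have := h.comp x h2
  refine this.congr_deriv ?_
  ring

private lemma g_bound {a b : ℝ} (ha : 0 < a) (hb : 0 < b) :
    ∀ x ∈ Icc (0:ℝ) (1/2), |(1-x)^a - (1-x)^b| ≤
      (a * max 1 ((1/2:ℝ)^(a-1)) + b * max 1 ((1/2:ℝ)^(b-1))) * x := by
  set C := a * max 1 ((1/2:ℝ)^(a-1)) + b * max 1 ((1/2:ℝ)^(b-1)) with hC
  have key := norm_image_sub_le_of_norm_deriv_le_segment'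
    (f := fun x : ℝ => (1-x)^a - (1-x)^b)
    (f' := fun x : ℝ => -(a * (1-x)^(a-1)) - -(b * (1-x)^(b-1)))
    (a := (0:ℝ)) (b := (1/2:ℝ)) (C := C)
    (fun x hx => (((one_sub_deriv a (by linarith [hx.2] : x ≠ 1)).sub
      (one_sub_deriv b (by linarith [hx.2] : x ≠ 1))).hasDerivWithinAt))
    (fun x hx => ?_)
  · intro x hx
    have := key x hx
    simpa [Real.one_rpow] using this
  · have hx0 : (0:ℝ) ≤ x := hx.1
    have hx2 : x < 1/2 := hx.2
    have hm : (1:ℝ)/2 ≤ 1 - x := by linarith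
    have hm1 : 1 - x ≤ 1 := by linarith
    have b1 : (1-x)^(a-1) ≤ max 1 ((1/2:ℝ)^(a-1)) := rpow_le_max (by norm_num) hm hm1
    have b2 : (1-x)^(b-1) ≤ max 1 ((1/2:ℝ)^(b-1)) := rpow_le_max (by norm_num) hm hm1
    have n1 : (0:ℝ) ≤ (1-x)^(a-1) := Real.rpow_nonneg (by linarith) _
    have n2 : (0:ℝ) ≤ (1-x)^(b-1) := Real.rpow_nonneg (by linarith) _
    simp only [Real.norm_eq_abs]
    rw [show -(a * (1-x)^(a-1)) - -(b * (1-x)^(b-1))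
        = b * (1-x)^(b-1) - a * (1-x)^(a-1) by ring]
    calc |b * (1-x)^(b-1) - a * (1-x)^(a-1)|
        ≤ |b * (1-x)^(b-1)| + |a * (1-x)^(a-1)| := abs_sub _ _
      _ ≤ C := by
          rw [abs_of_nonneg (by positivity), abs_of_nonneg (by positivity), hC]
          have := hb.le
          have := ha.le
          rw [add_comm]
          gcongr

private lemma J_integrable {a b : ℝ} (ha : 0 < a) (hb : 0 < b) (hab : a + b < 2) :
    IntegrableOn (fun x : ℝ => x ^ (-(a+b)) * ((1-x)^a - (1-x)^b)) (Ioo 0 1) := by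
  have hmeas : Measurable (fun x : ℝ => x ^ (-(a+b)) * ((1-x)^a - (1-x)^b)) := by fun_prop
  set C := a * max 1 ((1/2:ℝ)^(a-1)) + b * max 1 ((1/2:ℝ)^(b-1)) with hCdef
  have h1 : IntegrableOn (fun x : ℝ => x ^ (-(a+b)) * ((1-x)^a - (1-x)^b)) (Ioc 0 (1/2)) := by
    have hg : IntegrableOn (fun x : ℝ => C * x ^ (1-(a+b))) (Ioc 0 (1/2)) := by
      have h := intervalIntegral.intervalIntegrable_rpow' (a := (0:ℝ)) (b := 1/2)
        (r := 1-(a+b)) (by linarith)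
      rw [intervalIntegrable_iff_integrableOn_Ioc_of_le (by norm_num)] at h
      exact h.const_mul _
    refine Integrable.mono' hg hmeas.aestronglyMeasurable.restrict ?_
    rw [ae_restrict_iff' measurableSet_Ioc]
    filter_upwards with x hx
    have hx0 : 0 < x := hx.1
    have hbd := g_bound ha hb x ⟨hx0.le, hx.2⟩
    rw [Real.norm_eq_abs, abs_mul, abs_of_nonneg (Real.rpow_nonneg hx0.le _)]
    calc x ^ (-(a+b)) * |(1-x)^a - (1-x)^b| ≤ x ^ (-(a+b)) * (C * x) :=
          mul_le_mul_of_nonneg_left hbd (Real.rpow_nonneg hx0.le _)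
      _ = C * x ^ (1-(a+b)) := by
          rw [show (1:ℝ)-(a+b) = -(a+b)+1 by ring, Real.rpow_add_one hx0.ne']
          ring
  have h2 : IntegrableOn (fun x : ℝ => x ^ (-(a+b)) * ((1-x)^a - (1-x)^b)) (Ioc (1/2) 1) := by
    have hg : IntegrableOn (fun _ : ℝ => max 1 ((1/2:ℝ) ^ (-(a+b))) * 2) (Ioc (1/2) 1) :=
      integrableOn_const measure_Ioc_lt_top.ne
    refine Integrable.mono' hg hmeas.aestronglyMeasurable.restrict ?_
    rw [ae_restrict_iff' measurableSet_Ioc]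
    filter_upwards with x hx
    have hx0 : (1:ℝ)/2 ≤ x := hx.1.le
    have hx1 : x ≤ 1 := hx.2
    have h1x : (0:ℝ) ≤ 1 - x := by linarith
    rw [Real.norm_eq_abs, abs_mul, abs_of_nonneg (Real.rpow_nonneg (by linarith) _)]
    have e1 : (1-x)^a ≤ 1 := Real.rpow_le_one h1x (by linarith) ha.le
    have e2 : (1-x)^b ≤ 1 := Real.rpow_le_one h1x (by linarith) hb.le
    have n1 : (0:ℝ) ≤ (1-x)^a := Real.rpow_nonneg h1x _
    have n2 : (0:ℝ) ≤ (1-x)^b := Real.rpow_nonneg h1x _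
    have habs : |(1-x)^a - (1-x)^b| ≤ 2 := by
      rw [abs_le]; constructor <;> nlinarith
    exact mul_le_mul (rpow_le_max (by norm_num) hx0 hx1) habs (abs_nonneg _) (by positivity)
  have := h1.union h2
  rw [Set.Ioc_union_Ioc_eq_Ioc (by norm_num) (by norm_num)] at this
  exact this.mono_set Set.Ioo_subset_Ioc_self

private lemma beta_meas (p q : ℝ) :
    Measurable (fun x : ℝ => x ^ p * (1 - x) ^ q) := by
  fun_prop

private lemma beta_integrable {p q : ℝ} (hp : -1 < p) (hq : -1 < q) :
    IntegrableOn (fun x : ℝ => x ^ p * (1 - x) ^ q) (Set.Ioo 0 1) := by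
  have hmeas := beta_meas p q
  have h1 : IntegrableOn (fun x : ℝ => x ^ p * (1 - x) ^ q) (Ioc 0 (1/2)) := by
    have hg : IntegrableOn (fun x : ℝ => max 1 ((1/2:ℝ) ^ q) * x ^ p) (Ioc 0 (1/2)) := by
      have h := intervalIntegral.intervalIntegrable_rpow' (a := (0:ℝ)) (b := 1/2) hp
      rw [intervalIntegrable_iff_integrableOn_Ioc_of_le (by norm_num)] at h
      exact h.const_mul _
    refine Integrable.mono' hg hmeas.aestronglyMeasurable.restrict ?_
    rw [ae_restrict_iff' measurableSet_Ioc]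
    filter_upwards with x hx
    have hx0 : 0 < x := hx.1
    have h1x : (1:ℝ)/2 ≤ 1 - x := by linarith [hx.2]
    rw [Real.norm_eq_abs, abs_of_nonneg (by positivity)]
    calc x ^ p * (1-x)^q ≤ x ^ p * max 1 ((1/2:ℝ)^q) :=
          mul_le_mul_of_nonneg_left (rpow_le_max (by norm_num) h1x (by linarith [hx0]))
            (Real.rpow_nonneg hx0.le p)
      _ = max 1 ((1/2:ℝ)^q) * x ^ p := mul_comm _ _
  have h2 : IntegrableOn (fun x : ℝ => x ^ p * (1 - x) ^ q) (Ioc (1/2) 1) := by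
    have hg : IntegrableOn (fun x : ℝ => max 1 ((1/2:ℝ) ^ p) * (1-x) ^ q) (Ioc (1/2) 1) := by
      have h := (intervalIntegral.intervalIntegrable_rpow' (a := (0:ℝ)) (b := 1/2) hq).comp_sub_left 1
      norm_num at h
      have h' := h.symm
      rw [intervalIntegrable_iff_integrableOn_Ioc_of_le (by norm_num)] at h'
      exact h'.const_mul _
    refine Integrable.mono' hg hmeas.aestronglyMeasurable.restrict ?_
    rw [ae_restrict_iff' measurableSet_Ioc]
    filter_upwards with x hx
    have hx0 : (1:ℝ)/2 ≤ x := hx.1.le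
    have hx1 : x ≤ 1 := hx.2
    rw [Real.norm_eq_abs, abs_of_nonneg (mul_nonneg (Real.rpow_nonneg (by linarith) _)
      (Real.rpow_nonneg (by linarith) _))]
    calc x ^ p * (1-x)^q ≤ max 1 ((1/2:ℝ)^p) * (1-x)^q :=
          mul_le_mul_of_nonneg_right (rpow_le_max (by norm_num) hx0 hx1)
            (Real.rpow_nonneg (by linarith) q)
      _ = _ := rfl
  have := h1.union h2
  rw [Set.Ioc_union_Ioc_eq_Ioc (by norm_num) (by norm_num)] at this
  exact this.mono_set Set.Ioo_subset_Ioc_self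

private lemma J_value {a b : ℝ} (ha : 0 < a) (hb : 0 < b) (hab : a + b < 2) (hne : a + b ≠ 1) :
    (1-(a+b)) * (∫ x in Ioo (0:ℝ) 1, x ^ (-(a+b)) * ((1-x)^a - (1-x)^b))
      + (b * (∫ x in Ioo (0:ℝ) 1, x ^ (1-(a+b)) * (1-x)^(b-1))
      - a * (∫ x in Ioo (0:ℝ) 1, x ^ (1-(a+b)) * (1-x)^(a-1))) = 0 := by
  have h1s : (-1:ℝ) < 1-(a+b) := by linarith
  have ha1 : (-1:ℝ) < a-1 := by linarith
  have hb1 : (-1:ℝ) < b-1 := by linarith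
  set f' : ℝ → ℝ := fun x => (1-(a+b)) * (x ^ (-(a+b)) * ((1-x)^a - (1-x)^b))
      + (b * (x ^ (1-(a+b)) * (1-x)^(b-1)) - a * (x ^ (1-(a+b)) * (1-x)^(a-1))) with hf'
  have hintOn : IntegrableOn f' (Ioo 0 1) :=
    ((J_integrable ha hb hab).const_mul _).add
      (((beta_integrable h1s hb1).const_mul b).sub ((beta_integrable h1s ha1).const_mul a))
  have hint : IntervalIntegrable f' volume 0 1 := by
    rw [intervalIntegrable_iff_integrableOn_Ioc_of_le zero_le_one,
        integrableOn_Ioc_iff_integrableOn_Ioo]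
    exact hintOn
  have hderiv : ∀ x ∈ Ioo (0:ℝ) 1,
      HasDerivAt (fun x : ℝ => x ^ (1-(a+b)) * ((1-x)^a - (1-x)^b)) (f' x) x := by
    intro x hx
    have hx0 : (0:ℝ) < x := hx.1
    have hu : HasDerivAt (fun x : ℝ => x ^ (1-(a+b))) ((1-(a+b)) * x ^ (1-(a+b)-1)) x :=
      Real.hasDerivAt_rpow_const (Or.inl hx0.ne')
    have hv : HasDerivAt (fun x : ℝ => (1-x)^a - (1-x)^b)
        (-(a * (1-x)^(a-1)) - -(b * (1-x)^(b-1))) x :=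
      (one_sub_deriv a hx.2.ne).sub (one_sub_deriv b hx.2.ne)
    have hm := hu.mul hv
    refine hm.congr_deriv ?_
    rw [hf', show (1:ℝ)-(a+b)-1 = -(a+b) by ring]
    ring
  have h0 : Filter.Tendsto (fun x : ℝ => x ^ (1-(a+b)) * ((1-x)^a - (1-x)^b))
      (nhdsWithin 0 (Ioi 0)) (nhds 0) := by
    have hd : HasDerivAt (fun x : ℝ => (1-x)^a - (1-x)^b)
        (-(a * (1-(0:ℝ))^(a-1)) - -(b * (1-(0:ℝ))^(b-1))) 0 :=
      (one_sub_deriv a (by norm_num)).sub (one_sub_deriv b (by norm_num))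
    rw [hasDerivAt_iff_tendsto_slope] at hd
    have hslope : Filter.Tendsto (fun x : ℝ => ((1-x)^a - (1-x)^b) / x)
        (nhdsWithin 0 (Ioi 0)) (nhds (b - a)) := by
      have hd' := hd.mono_left (nhdsWithin_mono _ (fun y hy => ne_of_gt hy))
      have : (-(a * (1-(0:ℝ))^(a-1)) - -(b * (1-(0:ℝ))^(b-1))) = b - a := by
        rw [show (1:ℝ)-(0:ℝ) = 1 by norm_num, Real.one_rpow, Real.one_rpow]; ring
      rw [this] at hd'
      refine hd'.congr fun x => ?_
      simp [slope, Real.one_rpow, sub_zero, div_eq_inv_mul]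
    have hpow : Filter.Tendsto (fun x : ℝ => x ^ (2-(a+b))) (nhdsWithin 0 (Ioi 0)) (nhds 0) := by
      have hc : ContinuousAt (fun x : ℝ => x ^ (2-(a+b))) 0 :=
        Real.continuousAt_rpow_const 0 _ (Or.inr (by linarith))
      have := hc.tendsto.mono_left (nhdsWithin_le_nhds (s := Ioi (0:ℝ)))
      simpa [Real.zero_rpow (show (2:ℝ)-(a+b) ≠ 0 by intro h; linarith)] using this
    have hmul := hpow.mul hslope
    rw [zero_mul] at hmul
    refine hmul.congr' ?_
    filter_upwards [self_mem_nhdsWithin] with x hx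
    have hx0 : (0:ℝ) < x := hx
    rw [show (2:ℝ)-(a+b) = (1-(a+b))+1 by ring, Real.rpow_add_one hx0.ne']
    field_simp
  have h1 : Filter.Tendsto (fun x : ℝ => x ^ (1-(a+b)) * ((1-x)^a - (1-x)^b))
      (nhdsWithin 1 (Iio 1)) (nhds 0) := by
    have c1 : ContinuousAt (fun x : ℝ => x ^ (1-(a+b))) 1 :=
      Real.continuousAt_rpow_const 1 _ (Or.inl one_ne_zero)
    have c2 : ContinuousAt (fun x : ℝ => (1-x) ^ a) 1 :=
      (Real.continuousAt_rpow_const ((1:ℝ)-1) a (Or.inr ha.le)).comp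
        ((continuous_const.sub continuous_id).continuousAt)
    have c3 : ContinuousAt (fun x : ℝ => (1-x) ^ b) 1 :=
      (Real.continuousAt_rpow_const ((1:ℝ)-1) b (Or.inr hb.le)).comp
        ((continuous_const.sub continuous_id).continuousAt)
    have := (c1.tendsto.mul (c2.tendsto.sub c3.tendsto)).mono_left
      (nhdsWithin_le_nhds (s := Iio (1:ℝ)))
    simpa [Real.one_rpow, Real.zero_rpow ha.ne', Real.zero_rpow hb.ne'] using this
  have key := intervalIntegral.integral_eq_sub_of_hasDerivAt_of_tendsto zero_lt_one hderiv hint h0 h1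
  rw [intervalIntegral.integral_of_le zero_le_one, MeasureTheory.integral_Ioc_eq_integral_Ioo] at key
  have hadd : ∫ x in Ioo (0:ℝ) 1, f' x
      = (1-(a+b)) * (∫ x in Ioo (0:ℝ) 1, x ^ (-(a+b)) * ((1-x)^a - (1-x)^b))
      + (b * (∫ x in Ioo (0:ℝ) 1, x ^ (1-(a+b)) * (1-x)^(b-1))
      - a * (∫ x in Ioo (0:ℝ) 1, x ^ (1-(a+b)) * (1-x)^(a-1))) := by
    have hbInt : IntegrableOn (fun x : ℝ => b * (x ^ (1-(a+b)) * (1-x)^(b-1))) (Ioo 0 1) :=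
      (beta_integrable h1s hb1).const_mul b
    have haInt : IntegrableOn (fun x : ℝ => a * (x ^ (1-(a+b)) * (1-x)^(a-1))) (Ioo 0 1) :=
      (beta_integrable h1s ha1).const_mul a
    have hsubInt : IntegrableOn (fun x : ℝ => b * (x ^ (1-(a+b)) * (1-x)^(b-1))
        - a * (x ^ (1-(a+b)) * (1-x)^(a-1))) (Ioo 0 1) := by exact hbInt.sub haInt
    rw [hf']
    rw [integral_add ((J_integrable ha hb hab).const_mul _) hsubInt,
      integral_sub hbInt haInt, integral_const_mul, integral_const_mul, integral_const_mul]
  rw [← hadd, key]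
  ring

private lemma beta_value' {u v : ℝ} (hu : 0 < u) (hv : 0 < v) :
    ∫ x in Set.Ioo (0:ℝ) 1, x ^ (u-1) * (1-x) ^ (v-1)
      = Real.Gamma u * Real.Gamma v / Real.Gamma (u+v) := by
  have key : ((∫ x in Set.Ioo (0:ℝ) 1, x ^ (u-1) * (1-x) ^ (v-1) : ℝ) : ℂ)
      = Complex.betaIntegral u v := by
    rw [← MeasureTheory.integral_Ioc_eq_integral_Ioo,
        ← intervalIntegral.integral_of_le zero_le_one, ← intervalIntegral.integral_ofReal,
        Complex.betaIntegral]
    refine intervalIntegral.integral_congr fun x hx => ?_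
    rw [Set.uIcc_of_le zero_le_one] at hx
    push_cast
    rw [Complex.ofReal_cpow hx.1, Complex.ofReal_cpow (by linarith [hx.2] : (0:ℝ) ≤ 1 - x)]
    push_cast
    ring
  have hG := Complex.Gamma_mul_Gamma_eq_betaIntegral
      (by rwa [Complex.ofReal_re] : 0 < Complex.re u) (by rwa [Complex.ofReal_re])
  have hGuv : Real.Gamma (u+v) ≠ 0 := (Real.Gamma_pos_of_pos (by positivity)).ne'
  have h2 : Complex.Gamma ((u:ℂ) + v) = ((Real.Gamma (u+v) : ℝ) : ℂ) := by
    rw [← Complex.ofReal_add, Complex.Gamma_ofReal]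
  have h3 : Complex.Gamma ((u:ℂ) + v) ≠ 0 := by rw [h2]; exact_mod_cast hGuv
  have h4 : Complex.betaIntegral u v
      = ((Real.Gamma u * Real.Gamma v / Real.Gamma (u+v) : ℝ) : ℂ) := by
    rw [Complex.ofReal_div, Complex.ofReal_mul, ← Complex.Gamma_ofReal u,
      ← Complex.Gamma_ofReal v, ← h2, hG, mul_comm, mul_div_assoc, div_self h3, mul_one]
  rw [h4] at key
  exact_mod_cast key

theorem stmt2 (a b : ℝ) (ha : 0 < a) (hb : 0 < b) (hab : a + b < 2) (hne : a + b ≠ 1) :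
    IntegrableOn (fun x : ℝ => x ^ (-a - b) * ((1 - x) ^ (a - 1) - (1 - x) ^ (b - 1)))
      (Set.Ioo 0 1) ∧
    (∫ x in Set.Ioo (0:ℝ) 1, x ^ (-a - b) * ((1 - x) ^ (a - 1) - (1 - x) ^ (b - 1))) =
      ((1 - b) / (1 - a - b)) * Real.Gamma (2 - a - b) * Real.Gamma a / Real.Gamma (2 - b)
      - ((1 - a) / (1 - a - b)) * Real.Gamma (2 - a - b) * Real.Gamma b / Real.Gamma (2 - a) := by
  have h1s : (-1:ℝ) < 1-(a+b) := by linarith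
  have ha1 : (-1:ℝ) < a-1 := by linarith
  have hb1 : (-1:ℝ) < b-1 := by linarith
  have hpt : ∀ x ∈ Set.Ioo (0:ℝ) 1, x ^ (-a-b) * ((1-x)^(a-1) - (1-x)^(b-1))
      = x ^ (-(a+b)) * ((1-x)^a - (1-x)^b)
        + (x ^ (1-(a+b)) * (1-x)^(a-1) - x ^ (1-(a+b)) * (1-x)^(b-1)) := by
    intro x hx
    have hx0 : (0:ℝ) < x := hx.1
    have h1x : (0:ℝ) < 1 - x := by linarith [hx.2]
    have ea : (1-x)^a = (1-x)^(a-1) * (1-x) := by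
      rw [← Real.rpow_add_one h1x.ne' (a-1)]; norm_num
    have eb : (1-x)^b = (1-x)^(b-1) * (1-x) := by
      rw [← Real.rpow_add_one h1x.ne' (b-1)]; norm_num
    have ex : x ^ (1-(a+b)) = x ^ (-(a+b)) * x := by
      rw [show (1:ℝ)-(a+b) = -(a+b)+1 by ring, Real.rpow_add_one hx0.ne']
    rw [show -a-b = -(a+b) by ring, ea, eb, ex]
    ring
  have hsum : IntegrableOn (fun x : ℝ => x ^ (-(a+b)) * ((1-x)^a - (1-x)^b)
      + (x ^ (1-(a+b)) * (1-x)^(a-1) - x ^ (1-(a+b)) * (1-x)^(b-1))) (Set.Ioo 0 1) := by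
    have h2 : IntegrableOn (fun x : ℝ => x ^ (1-(a+b)) * (1-x)^(a-1)
        - x ^ (1-(a+b)) * (1-x)^(b-1)) (Set.Ioo 0 1) := by
      exact (beta_integrable h1s ha1).sub (beta_integrable h1s hb1)
    exact (J_integrable ha hb hab).add h2
  have hIint : IntegrableOn (fun x : ℝ => x ^ (-a-b) * ((1-x)^(a-1) - (1-x)^(b-1)))
      (Set.Ioo 0 1) :=
    hsum.congr_fun (fun x hx => (hpt x hx).symm) measurableSet_Ioo
  refine ⟨hIint, ?_⟩
  have hKa : ∫ x in Set.Ioo (0:ℝ) 1, x ^ (1-(a+b)) * (1-x)^(a-1)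
      = Real.Gamma (2-a-b) * Real.Gamma a / Real.Gamma (2-b) := by
    have h := beta_value' (u := 2-(a+b)) (v := a) (by linarith) ha
    rw [show (2:ℝ)-(a+b)-1 = 1-(a+b) by ring, show (2:ℝ)-(a+b)+a = 2-b by ring,
      show (2:ℝ)-(a+b) = 2-a-b by ring] at h
    exact h
  have hKb : ∫ x in Set.Ioo (0:ℝ) 1, x ^ (1-(a+b)) * (1-x)^(b-1)
      = Real.Gamma (2-a-b) * Real.Gamma b / Real.Gamma (2-a) := by
    have h := beta_value' (u := 2-(a+b)) (v := b) (by linarith) hb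
    rw [show (2:ℝ)-(a+b)-1 = 1-(a+b) by ring, show (2:ℝ)-(a+b)+b = 2-a by ring,
      show (2:ℝ)-(a+b) = 2-a-b by ring] at h
    exact h
  have hJv := J_value ha hb hab hne
  have heq : (∫ x in Set.Ioo (0:ℝ) 1, x ^ (-a-b) * ((1-x)^(a-1) - (1-x)^(b-1)))
      = (∫ x in Set.Ioo (0:ℝ) 1, x ^ (-(a+b)) * ((1-x)^a - (1-x)^b))
        + ((∫ x in Set.Ioo (0:ℝ) 1, x ^ (1-(a+b)) * (1-x)^(a-1))
          - (∫ x in Set.Ioo (0:ℝ) 1, x ^ (1-(a+b)) * (1-x)^(b-1))) := by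
    rw [setIntegral_congr_fun measurableSet_Ioo hpt]
    rw [integral_add (J_integrable ha hb hab)
        (by exact (beta_integrable h1s ha1).sub (beta_integrable h1s hb1)),
      integral_sub (beta_integrable h1s ha1) (beta_integrable h1s hb1)]
  rw [heq, hKa, hKb]
  rw [hKa, hKb] at hJv
  set A := Real.Gamma (2-a-b) * Real.Gamma a / Real.Gamma (2-b) with hA
  set B := Real.Gamma (2-a-b) * Real.Gamma b / Real.Gamma (2-a) with hB
  have hs0 : 1-a-b ≠ 0 := by intro h; apply hne; linarith
  have e1 : ((1-b)/(1-a-b)) * Real.Gamma (2-a-b) * Real.Gamma a / Real.Gamma (2-b)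
      = ((1-b)/(1-a-b)) * A := by rw [hA]; ring
  have e2 : ((1-a)/(1-a-b)) * Real.Gamma (2-a-b) * Real.Gamma b / Real.Gamma (2-a)
      = ((1-a)/(1-a-b)) * B := by rw [hB]; ring
  rw [e1, e2]
  set J := ∫ x in Set.Ioo (0:ℝ) 1, x ^ (-(a+b)) * ((1-x)^a - (1-x)^b) with hJdef
  field_simp
  linear_combination hJv
end

section
/- For real a, b with 0 < a, 0 < b, a + b < 2 and a + b ≠ 1, the substitution y = 2/x − 1 gives the identity 2^{1-a-b} ∫₁^{∞} [ (y-1)^{a-1}(y+1)^{b-1} − (y+1)^{a-1}(y-1)^{b-1} ] dy = ∫₀¹ x^{-a-b} [ (1-x)^{a-1} − (1-x)^{b-1} ] dx, both integrals being convergent. -/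
open MeasureTheory

private lemma lip_bound (c : ℝ) :
    ∃ K, 0 ≤ K ∧ ∀ x ∈ Set.Icc (0:ℝ) (1/2), |(1-x) ^ c - 1| ≤ K * x := by
  refine ⟨|c| * 2 ^ |c - 1|, by positivity, fun x hx => ?_⟩
  have h1 : ∀ t ∈ Set.Icc (0:ℝ) (1/2), HasDerivWithinAt (fun t => (1-t) ^ c)
      (c * (1-t) ^ (c-1) * (-1)) (Set.Icc (0:ℝ) (1/2)) t := by
    intro t ht
    have h0 : (1:ℝ) - t ≠ 0 := by
      have := ht.2; intro h; nlinarith [ht.1]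
    exact ((Real.hasDerivAt_rpow_const (Or.inl h0)).comp t
      (((hasDerivAt_id t).const_sub 1))).hasDerivWithinAt
  have hb : ∀ t ∈ Set.Icc (0:ℝ) (1/2), ‖c * (1-t) ^ (c-1) * (-1)‖ ≤ |c| * 2 ^ |c - 1| := by
    intro t ht
    have h2 : (1:ℝ)/2 ≤ 1 - t := by linarith [ht.2]
    have hpos : (0:ℝ) < 1 - t := by linarith
    rw [norm_mul, norm_mul, norm_neg, norm_one, mul_one, Real.norm_eq_abs, Real.norm_eq_abs,
      abs_of_pos (Real.rpow_pos_of_pos hpos _)]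
    gcongr
    rcases le_or_gt 0 (c - 1) with h | h
    · calc (1 - t) ^ (c - 1) ≤ 1 := Real.rpow_le_one hpos.le (by linarith [ht.1]) h
        _ ≤ 2 ^ |c - 1| := Real.one_le_rpow (by norm_num) (abs_nonneg _)
    · calc (1 - t) ^ (c - 1) ≤ ((1:ℝ)/2) ^ (c - 1) :=
          Real.rpow_le_rpow_of_nonpos (by norm_num) h2 h.le
        _ = 2 ^ (-(c-1)) := by
          rw [one_div, Real.inv_rpow (by norm_num), ← Real.rpow_neg (by norm_num)];
        _ = 2 ^ |c - 1| := by rw [abs_of_neg h]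
  have := (convex_Icc (0:ℝ) (1/2)).norm_image_sub_le_of_norm_hasDerivWithin_le h1 hb
    (Set.left_mem_Icc.2 (by norm_num)) hx
  simpa [Real.norm_eq_abs, abs_of_nonneg hx.1] using this

private lemma tail_int (c : ℝ) (hc : 0 < c) :
    IntegrableOn (fun x : ℝ => (1 - x) ^ (c - 1)) (Set.Ioo (1/2 : ℝ) 1) := by
  have h : IntervalIntegrable (fun x : ℝ => x ^ (c-1)) volume 0 (1/2) :=
    intervalIntegral.intervalIntegrable_rpow' (by linarith)
  have h2 := h.comp_sub_left 1
  rw [intervalIntegrable_iff] at h2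
  simp only [show (1:ℝ) - 0 = 1 by norm_num, show (1:ℝ) - 1/2 = 1/2 by norm_num] at h2
  rw [Set.uIoc_comm, Set.uIoc_of_le (by norm_num : (1/2:ℝ) ≤ 1)] at h2
  exact h2.mono_set Set.Ioo_subset_Ioc_self

private lemma meas_rhs (a b : ℝ) :
    AEStronglyMeasurable (fun x : ℝ => x ^ (-a - b) * ((1 - x) ^ (a - 1) - (1 - x) ^ (b - 1)))
      (volume.restrict (Set.Ioo (0:ℝ) 1)) := by
  apply Measurable.aestronglyMeasurable
  fun_prop

private lemma rhs_int (a b : ℝ) (ha : 0 < a) (hb : 0 < b) (hab : a + b < 2) :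
    IntegrableOn (fun x : ℝ => x ^ (-a - b) * ((1 - x) ^ (a - 1) - (1 - x) ^ (b - 1)))
      (Set.Ioo (0:ℝ) 1) := by
  obtain ⟨K1, hK1, hb1⟩ := lip_bound (a - 1)
  obtain ⟨K2, hK2, hb2⟩ := lip_bound (b - 1)
  have hunion : Set.Ioc (0:ℝ) (1/2) ∪ Set.Ioo (1/2:ℝ) 1 = Set.Ioo (0:ℝ) 1 :=
    Set.Ioc_union_Ioo_eq_Ioo (by norm_num) (by norm_num)
  rw [← hunion]
  apply IntegrableOn.union
  · have hg : IntegrableOn (fun x : ℝ => (K1 + K2) * x ^ (1 - a - b)) (Set.Ioc (0:ℝ) (1/2)) := by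
      have h : IntervalIntegrable (fun x : ℝ => x ^ (1 - a - b)) volume 0 (1/2) :=
        intervalIntegral.intervalIntegrable_rpow' (by linarith)
      rw [intervalIntegrable_iff, Set.uIoc_of_le (by norm_num : (0:ℝ) ≤ 1/2)] at h
      exact h.const_mul _
    refine Integrable.mono' hg ((meas_rhs a b).mono_measure
      (Measure.restrict_mono (by intro x hx; exact ⟨hx.1, by linarith [hx.2]⟩) le_rfl)) ?_
    rw [ae_restrict_iff' measurableSet_Ioc]
    filter_upwards with x hx
    have hx0 : 0 < x := hx.1
    have hxI : x ∈ Set.Icc (0:ℝ) (1/2) := ⟨hx0.le, hx.2⟩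
    have key : |(1-x) ^ (a-1) - (1-x) ^ (b-1)| ≤ (K1 + K2) * x := by
      calc |(1-x) ^ (a-1) - (1-x) ^ (b-1)|
          ≤ |(1-x) ^ (a-1) - 1| + |(1-x) ^ (b-1) - 1| := by
            simpa [abs_sub_comm] using abs_sub_le ((1-x) ^ (a-1)) 1 ((1-x) ^ (b-1))
        _ ≤ K1 * x + K2 * x := add_le_add (hb1 x hxI) (hb2 x hxI)
        _ = (K1 + K2) * x := by ring
    have heq : ‖x ^ (-a - b) * ((1 - x) ^ (a - 1) - (1 - x) ^ (b - 1))‖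
        = x ^ (-a-b) * |(1-x) ^ (a-1) - (1-x) ^ (b-1)| := by
      rw [norm_mul, Real.norm_eq_abs, Real.norm_eq_abs,
        abs_of_pos (Real.rpow_pos_of_pos hx0 _)]
    rw [heq]
    calc x ^ (-a-b) * |(1-x) ^ (a-1) - (1-x) ^ (b-1)|
        ≤ x ^ (-a-b) * ((K1 + K2) * x) :=
          mul_le_mul_of_nonneg_left key (Real.rpow_pos_of_pos hx0 _).le
      _ = (K1 + K2) * x ^ (1 - a - b) := by
          rw [show (1:ℝ)-a-b = (-a-b)+1 by ring, Real.rpow_add hx0, Real.rpow_one]; ring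
  · have h2 : ∀ c : ℝ, 0 < c →
        IntegrableOn (fun x : ℝ => x ^ (-a - b) * (1 - x) ^ (c - 1)) (Set.Ioo (1/2:ℝ) 1) := by
      intro c hc
      refine Integrable.mono' (((tail_int c hc).const_mul ((2:ℝ) ^ (a+b)))) ?_ ?_
      · apply Measurable.aestronglyMeasurable; fun_prop
      · rw [ae_restrict_iff' measurableSet_Ioo]
        filter_upwards with x hx
        have hx0 : (0:ℝ) < x := by linarith [hx.1]
        have h1x : (0:ℝ) < 1 - x := by linarith [hx.2]
        rw [norm_mul, Real.norm_eq_abs, Real.norm_eq_abs,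
          abs_of_pos (Real.rpow_pos_of_pos hx0 _), abs_of_pos (Real.rpow_pos_of_pos h1x _)]
        have hle : x ^ (-a-b) ≤ (2:ℝ) ^ (a+b) := by
          calc x ^ (-a-b) ≤ ((1:ℝ)/2) ^ (-a-b) :=
              Real.rpow_le_rpow_of_nonpos (by norm_num) hx.1.le (by linarith)
            _ = 2 ^ (a+b) := by
              rw [one_div, Real.inv_rpow (by norm_num), ← Real.rpow_neg (by norm_num)]
              ring_nf
        exact mul_le_mul_of_nonneg_right hle (Real.rpow_pos_of_pos h1x _).le
    have h3 := (h2 a ha).sub (h2 b hb)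
    exact IntegrableOn.congr_fun h3 (fun x hx => by simp [Pi.sub_apply]; ring) measurableSet_Ioo

private lemma key_aux (x p q : ℝ) (hx0 : 0 < x) (hx1 : x < 1) :
    2 / x^2 * ((2*(1-x)/x) ^ p * (2/x) ^ q) = 2 ^ (p+q+1) * (x ^ (-p-q-2) * (1-x) ^ p) := by
  have h1 : 0 < 1 - x := by linarith
  have h2 : (0:ℝ) < 2*(1-x)/x := by positivity
  have h3 : (0:ℝ) < 2/x := by positivity
  have h4 : (0:ℝ) < 2/x^2 := by positivity
  rw [Real.rpow_def_of_pos h2, Real.rpow_def_of_pos h3,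
      Real.rpow_def_of_pos (by norm_num : (0:ℝ) < 2),
      Real.rpow_def_of_pos hx0, Real.rpow_def_of_pos h1]
  rw [show 2/x^2 = Real.exp (Real.log (2/x^2)) by rw [Real.exp_log h4]]
  rw [← Real.exp_add, ← Real.exp_add, ← Real.exp_add, ← Real.exp_add]
  congr 1
  rw [Real.log_div (by positivity) (by positivity),
      Real.log_div (by positivity) (by positivity),
      Real.log_div (by positivity) (by positivity),
      Real.log_mul (by norm_num) h1.ne', Real.log_pow]
  push_cast; ring

theorem stmt3 (a b : ℝ) (ha : 0 < a) (hb : 0 < b) (hab : a + b < 2) (hne : a + b ≠ 1) :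
    IntegrableOn
      (fun y : ℝ => (y - 1) ^ (a - 1) * (y + 1) ^ (b - 1) - (y + 1) ^ (a - 1) * (y - 1) ^ (b - 1))
      (Set.Ioi 1) ∧
    IntegrableOn (fun x : ℝ => x ^ (-a - b) * ((1 - x) ^ (a - 1) - (1 - x) ^ (b - 1)))
      (Set.Ioo 0 1) ∧
    (2 : ℝ) ^ (1 - a - b) *
      (∫ y in Set.Ioi (1:ℝ),
        ((y - 1) ^ (a - 1) * (y + 1) ^ (b - 1) - (y + 1) ^ (a - 1) * (y - 1) ^ (b - 1))) =
    ∫ x in Set.Ioo (0:ℝ) 1, x ^ (-a - b) * ((1 - x) ^ (a - 1) - (1 - x) ^ (b - 1)) := by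
  set g : ℝ → ℝ := fun y : ℝ =>
    (y - 1) ^ (a - 1) * (y + 1) ^ (b - 1) - (y + 1) ^ (a - 1) * (y - 1) ^ (b - 1) with hg
  set h : ℝ → ℝ := fun x : ℝ => x ^ (-a - b) * ((1 - x) ^ (a - 1) - (1 - x) ^ (b - 1)) with hh
  have hderiv : ∀ x ∈ Set.Ioo (0:ℝ) 1,
      HasDerivWithinAt (fun x : ℝ => 2/x - 1) (2 * -((x:ℝ)^2)⁻¹) (Set.Ioo (0:ℝ) 1) x := by
    intro x hx
    have hd := ((hasDerivAt_inv (ne_of_gt hx.1)).const_mul (2:ℝ)).sub_const 1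
    simpa [div_eq_mul_inv] using hd.hasDerivWithinAt
  have hinj : Set.InjOn (fun x : ℝ => 2/x - 1) (Set.Ioo (0:ℝ) 1) := by
    intro x hx y hy hxy
    simp only at hxy
    have hx0 : x ≠ 0 := ne_of_gt hx.1
    have hy0 : y ≠ 0 := ne_of_gt hy.1
    have h1 : 2/x = 2/y := by linarith
    field_simp at h1
    linarith
  have himg : (fun x : ℝ => 2/x - 1) '' Set.Ioo 0 1 = Set.Ioi 1 := by
    ext y
    simp only [Set.mem_image, Set.mem_Ioo, Set.mem_Ioi]
    constructor
    · rintro ⟨x, ⟨hx0, hx1⟩, rfl⟩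
      have : 2 < 2 / x := by rw [lt_div_iff₀ hx0]; linarith
      linarith
    · intro hy
      refine ⟨2 / (y + 1), ⟨by positivity, ?_⟩, ?_⟩
      · rw [div_lt_one (by linarith)]; linarith
      · have h1 : y + 1 ≠ 0 := by positivity
        field_simp
        ring
  have hpt : ∀ x ∈ Set.Ioo (0:ℝ) 1,
      |2 * -((x:ℝ)^2)⁻¹| • g (2/x - 1) = 2 ^ (a+b-1) * h x := by
    intro x hx
    obtain ⟨hx0, hx1⟩ := hx
    have habs : |2 * -((x:ℝ)^2)⁻¹| = 2 / x^2 := by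
      rw [abs_mul, abs_neg, abs_inv, abs_of_pos (by positivity : (0:ℝ) < x^2)]
      norm_num [div_eq_mul_inv]
    have e1 : (2/x - 1) - 1 = 2*(1-x)/x := by field_simp; ring
    have e2 : (2/x - 1) + 1 = 2/x := by ring
    rw [smul_eq_mul, habs, hg]
    simp only [e1, e2]
    have k1 := key_aux x (a-1) (b-1) hx0 hx1
    have k2 := key_aux x (b-1) (a-1) hx0 hx1
    rw [show (a-1)+(b-1)+1 = a+b-1 by ring, show -(a-1)-(b-1)-2 = -a-b by ring] at k1
    rw [show (b-1)+(a-1)+1 = a+b-1 by ring, show -(b-1)-(a-1)-2 = -a-b by ring] at k2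
    rw [mul_sub, mul_comm ((2/x) ^ (a-1)) ((2*(1-x)/x) ^ (b-1)), k1, k2, hh]
    ring
  have hRHS := rhs_int a b ha hb hab
  have hint2 : IntegrableOn (fun x : ℝ => |2 * -((x:ℝ)^2)⁻¹| • g (2/x - 1))
      (Set.Ioo (0:ℝ) 1) := by
    refine IntegrableOn.congr_fun (hRHS.const_mul ((2:ℝ) ^ (a+b-1)))
      (fun x hx => (hpt x hx).symm) measurableSet_Ioo
  have hiff := integrableOn_image_iff_integrableOn_abs_deriv_smul
    measurableSet_Ioo hderiv hinj g
  rw [himg] at hiff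
  refine ⟨hiff.2 hint2, hRHS, ?_⟩
  have hint := integral_image_eq_integral_abs_deriv_smul measurableSet_Ioo hderiv hinj g
  rw [himg] at hint
  rw [hint]
  rw [setIntegral_congr_fun measurableSet_Ioo hpt]
  rw [integral_const_mul, ← mul_assoc, ← Real.rpow_add (by norm_num : (0:ℝ) < 2),
      show (1-a-b)+(a+b-1) = 0 by ring, Real.rpow_zero, one_mul]
end

section
/- Let β > 0, ε > 0, 0 < Δ < 1/2, and b > 0. Define G^ε(τ) = (b/(2i sin(πΔ))) [ (β/π · sinh(π(ε − iτ)/β))^{-2Δ} − (β/π · sinh(π(ε + iτ)/β))^{-2Δ} ] using principal complex powers, for τ ∈ (−β/2, β/2). Then for every fixed τ ∈ (−β/2, β/2) with τ ≠ 0, lim_{ε→0⁺} G^ε(τ) = b · sgn(τ) / |β/π · sin(πτ/β)|^{2Δ}. -/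
set_option maxHeartbeats 1000000

open Complex Real

lemma diff_cpow (s Δ : ℝ) (hs : 0 < s) :
    (-(Complex.I) * s) ^ (-(2*Δ) : ℂ) - (Complex.I * s) ^ (-(2*Δ) : ℂ)
      = 2 * Complex.I * Real.sin (Real.pi * Δ) * ((s ^ (-(2*Δ)) : ℝ) : ℂ) := by
  have hs' : (s:ℂ) ≠ 0 := by exact_mod_cast hs.ne'
  have hI : (Complex.I) ≠ 0 := Complex.I_ne_zero
  rw [show -Complex.I * (s:ℂ) = (s:ℂ) * (-Complex.I) by ring,
      show Complex.I * (s:ℂ) = (s:ℂ) * Complex.I by ring]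
  have h1 : Complex.log ((s:ℂ) * -Complex.I) = (Real.log s : ℂ) + -(Real.pi/2 : ℂ) * Complex.I := by
    rw [Complex.log_ofReal_mul hs (by simp), Complex.log_neg_I]
  have h2 : Complex.log ((s:ℂ) * Complex.I) = (Real.log s : ℂ) + (Real.pi/2 : ℂ) * Complex.I := by
    rw [Complex.log_ofReal_mul hs hI, Complex.log_I]
  rw [Complex.cpow_def_of_ne_zero (mul_ne_zero hs' (neg_ne_zero.mpr hI)),
      Complex.cpow_def_of_ne_zero (mul_ne_zero hs' hI), h1, h2,
      show ((Real.log s : ℂ) + -(Real.pi/2 : ℂ) * Complex.I) * (-(2*Δ):ℂ)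
        = ((-(2*Δ) * Real.log s : ℝ) : ℂ) + ((Real.pi * Δ : ℝ) : ℂ) * Complex.I by push_cast; ring,
      show ((Real.log s : ℂ) + (Real.pi/2 : ℂ) * Complex.I) * (-(2*Δ):ℂ)
        = ((-(2*Δ) * Real.log s : ℝ) : ℂ) + ((-(Real.pi * Δ) : ℝ) : ℂ) * Complex.I by push_cast; ring,
      Complex.exp_add, Complex.exp_add, Complex.exp_mul_I, Complex.exp_mul_I]
  rw [show ((s : ℝ) ^ (-(2*Δ)) : ℝ) = Real.exp (-(2*Δ) * Real.log s) by
      rw [Real.rpow_def_of_pos hs]; ring_nf]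
  push_cast [← Complex.ofReal_exp, ← Complex.ofReal_cos, ← Complex.ofReal_sin]
  simp only [Complex.cos_neg, Complex.sin_neg]
  push_cast
  ring

theorem stmt9 (β Δ b : ℝ) (hβ : 0 < β) (h1 : 0 < Δ) (h2 : Δ < 1/2) (hb : 0 < b)
    (τ : ℝ) (hτ : τ ∈ Set.Ioo (-(β/2)) (β/2)) (hτ0 : τ ≠ 0) :
    Filter.Tendsto (fun ε : ℝ =>
      ((b : ℂ) / (2 * Complex.I * (Real.sin (Real.pi * Δ) : ℂ))) *
        ((((β / Real.pi : ℝ) : ℂ) *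
            Complex.sinh ((Real.pi : ℂ) * ((ε : ℂ) - Complex.I * τ) / (β : ℂ))) ^ (-(2 * Δ) : ℂ)
          - (((β / Real.pi : ℝ) : ℂ) *
            Complex.sinh ((Real.pi : ℂ) * ((ε : ℂ) + Complex.I * τ) / (β : ℂ))) ^ (-(2 * Δ) : ℂ)))
      (nhdsWithin 0 (Set.Ioi 0))
      (nhds ((b * Real.sign τ / |β / Real.pi * Real.sin (Real.pi * τ / β)| ^ (2 * Δ) : ℝ) : ℂ)) := by
  have hπ : (0:ℝ) < Real.pi := Real.pi_pos
  have hβ0 : (β:ℂ) ≠ 0 := by exact_mod_cast hβ.ne'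
  set s : ℝ := β / Real.pi * Real.sin (Real.pi * τ / β) with hs_def
  have hsin : Real.sin (Real.pi * Δ) ≠ 0 := by
    refine (Real.sin_pos_of_pos_of_lt_pi (mul_pos hπ h1) ?_).ne'
    nlinarith
  set c : ℂ := (b : ℂ) / (2 * Complex.I * (Real.sin (Real.pi * Δ) : ℂ)) with hc_def
  set w : ℂ := (-(2*Δ) : ℂ) with hw_def
  set A : ℝ → ℂ := fun ε => (((β / Real.pi : ℝ) : ℂ) *
      Complex.sinh ((Real.pi : ℂ) * ((ε : ℂ) - Complex.I * τ) / (β : ℂ))) with hA_def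
  set B : ℝ → ℂ := fun ε => (((β / Real.pi : ℝ) : ℂ) *
      Complex.sinh ((Real.pi : ℂ) * ((ε : ℂ) + Complex.I * τ) / (β : ℂ))) with hB_def
  have hA0 : A 0 = -Complex.I * (s : ℂ) := by
    have e1 : (Real.pi : ℂ) * (((0:ℝ):ℂ) - Complex.I * τ) / (β : ℂ)
        = ((-(Real.pi * τ / β) : ℝ) : ℂ) * Complex.I := by
      push_cast
      field_simp
      ring
    simp only [hA_def, e1, Complex.sinh_mul_I, ← Complex.ofReal_sin, Real.sin_neg, hs_def]
    push_cast
    ring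
  have hB0 : B 0 = Complex.I * (s : ℂ) := by
    have e1 : (Real.pi : ℂ) * (((0:ℝ):ℂ) + Complex.I * τ) / (β : ℂ)
        = (((Real.pi * τ / β) : ℝ) : ℂ) * Complex.I := by
      push_cast
      field_simp
      ring
    simp only [hB_def, e1, Complex.sinh_mul_I, ← Complex.ofReal_sin, hs_def]
    push_cast
    ring
  have ht1 : -(Real.pi/2) < Real.pi * τ / β := by
    rw [lt_div_iff₀ hβ]; nlinarith [hτ.1]
  have ht2 : Real.pi * τ / β < Real.pi/2 := by
    rw [div_lt_iff₀ hβ]; nlinarith [hτ.2]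
  have hsinτ : Real.sin (Real.pi * τ / β) ≠ 0 := by
    intro h
    have h0 : Real.pi * τ / β = 0 :=
      (Real.sin_eq_zero_iff_of_lt_of_lt (by linarith) (by linarith)).mp h
    rcases div_eq_zero_iff.mp h0 with h' | h'
    · rcases mul_eq_zero.mp h' with h'' | h''
      · exact absurd h'' hπ.ne'
      · exact hτ0 h''
    · exact absurd h' hβ.ne'
  have hs0 : s ≠ 0 := mul_ne_zero (by positivity) hsinτ
  have hcont : ContinuousAt (fun ε : ℝ => c * ((A ε) ^ w - (B ε) ^ w)) 0 := by
    have cA : Continuous A := by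
      apply Continuous.mul continuous_const
      exact Complex.continuous_sinh.comp (by continuity)
    have cB : Continuous B := by
      apply Continuous.mul continuous_const
      exact Complex.continuous_sinh.comp (by continuity)
    apply ContinuousAt.mul continuousAt_const
    apply ContinuousAt.sub
    · exact (continuousAt_cpow_const (by
        rw [hA0]; apply Complex.mem_slitPlane_iff.mpr; right
        simp [hs0])).comp cA.continuousAt
    · exact (continuousAt_cpow_const (by
        rw [hB0]; apply Complex.mem_slitPlane_iff.mpr; right
        simp [hs0])).comp cB.continuousAt
  have htends : Filter.Tendsto (fun ε : ℝ => c * ((A ε) ^ w - (B ε) ^ w))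
      (nhdsWithin 0 (Set.Ioi 0)) (nhds (c * ((A 0) ^ w - (B 0) ^ w))) :=
    (hcont.tendsto).mono_left nhdsWithin_le_nhds
  have hval : c * ((A 0) ^ w - (B 0) ^ w)
      = ((b * Real.sign τ / |s| ^ (2 * Δ) : ℝ) : ℂ) := by
    rw [hA0, hB0]
    have h2I : (2 * Complex.I * (Real.sin (Real.pi * Δ) : ℂ)) ≠ 0 :=
      mul_ne_zero (mul_ne_zero two_ne_zero Complex.I_ne_zero) (Complex.ofReal_ne_zero.mpr hsin)
    rcases lt_or_gt_of_ne hτ0 with hτneg | hτpos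
    · -- τ < 0, so s < 0
      have hsneg : s < 0 := by
        have htneg : Real.pi * τ / β < 0 := by
          apply div_neg_of_neg_of_pos _ hβ
          nlinarith
        have : Real.sin (Real.pi * τ / β) < 0 :=
          Real.sin_neg_of_neg_of_neg_pi_lt htneg (by linarith)
        exact mul_neg_of_pos_of_neg (by positivity) this
      have hkey := diff_cpow (-s) Δ (by linarith)
      have r1 : (-Complex.I * (s:ℂ)) = Complex.I * ((-s:ℝ):ℂ) := by push_cast; ring
      have r2 : (Complex.I * (s:ℂ)) = -Complex.I * ((-s:ℝ):ℂ) := by push_cast; ring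
      rw [r1, r2, show (Complex.I * ((-s:ℝ):ℂ)) ^ w - (-Complex.I * ((-s:ℝ):ℂ)) ^ w
          = -((-Complex.I * ((-s:ℝ):ℂ)) ^ w - (Complex.I * ((-s:ℝ):ℂ)) ^ w) from (neg_sub _ _).symm,
        hw_def, hkey, Real.sign_of_neg hτneg, abs_of_neg hsneg, hc_def]
      have hrpow : (-s) ^ (-(2*Δ)) = ((-s) ^ (2*Δ))⁻¹ := Real.rpow_neg (by linarith) _
      rw [hrpow]
      have hne : ((-s : ℝ) ^ (2*Δ) : ℝ) ≠ 0 := by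
        have : (0:ℝ) < (-s) ^ (2*Δ) := Real.rpow_pos_of_pos (by linarith) _
        linarith
      have hsinC : Complex.sin ((Real.pi : ℂ) * (Δ:ℂ)) ≠ 0 := by
        rw [← Complex.ofReal_mul, ← Complex.ofReal_sin]
        exact_mod_cast hsin
      push_cast
      field_simp [Complex.I_ne_zero, hsinC]
    · -- τ > 0, so s > 0
      have hspos : 0 < s := by
        have : 0 < Real.sin (Real.pi * τ / β) := by
          apply Real.sin_pos_of_pos_of_lt_pi
          · positivity
          · rw [div_lt_iff₀ hβ]; nlinarith [hτ.2]
        positivity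
      have hkey := diff_cpow s Δ hspos
      rw [hkey, Real.sign_of_pos hτpos, abs_of_pos hspos, hc_def]
      have hrpow : s ^ (-(2*Δ)) = (s ^ (2*Δ))⁻¹ := Real.rpow_neg hspos.le _
      rw [hrpow]
      have hne : (s ^ (2*Δ) : ℝ) ≠ 0 := by
        have : (0:ℝ) < s ^ (2*Δ) := Real.rpow_pos_of_pos hspos _
        linarith
      have hsinC : Complex.sin ((Real.pi : ℂ) * (Δ:ℂ)) ≠ 0 := by
        rw [← Complex.ofReal_mul, ← Complex.ofReal_sin]
        exact_mod_cast hsin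
      push_cast
      field_simp [Complex.I_ne_zero, hsinC]
  rw [← hval]
  exact htends
end

section
/- Let β > 0, ε > 0, 0 < Δ < 1/2, b > 0, and let G^ε(τ) be defined as (b/(2i sin(πΔ))) [ (β/π · sinh(π(ε − iτ)/β))^{-2Δ} − (β/π · sinh(π(ε + iτ)/β))^{-2Δ} ] with principal complex powers. Then G^ε is real-valued, antisymmetric (G^ε(−τ) = −G^ε(τ)), and G^ε(τ) ≥ 0 for 0 ≤ τ ≤ β/2. -/
theorem stmt10 (β ε Δ b : ℝ) (hβ : 0 < β) (hε : 0 < ε) (h1 : 0 < Δ) (h2 : Δ < 1/2) (hb : 0 < b)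
    (G : ℝ → ℂ)
    (hG : ∀ τ : ℝ, G τ =
      ((b : ℂ) / (2 * Complex.I * (Real.sin (Real.pi * Δ) : ℂ))) *
        ((((β / Real.pi : ℝ) : ℂ) *
            Complex.sinh ((Real.pi : ℂ) * ((ε : ℂ) - Complex.I * τ) / (β : ℂ))) ^ (-(2 * Δ) : ℂ)
          - (((β / Real.pi : ℝ) : ℂ) *
            Complex.sinh ((Real.pi : ℂ) * ((ε : ℂ) + Complex.I * τ) / (β : ℂ))) ^ (-(2 * Δ) : ℂ))) :
    (∀ τ : ℝ, |τ| ≤ β / 2 → (G τ).im = 0) ∧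
    (∀ τ : ℝ, G (-τ) = -G τ) ∧
    (∀ τ : ℝ, 0 ≤ τ → τ ≤ β / 2 → 0 ≤ (G τ).re) := by
  have hπ := Real.pi_pos
  set s := Real.sin (Real.pi * Δ) with hsdef
  have hs : 0 < s := Real.sin_pos_of_pos_of_lt_pi (by positivity) (by nlinarith)
  set z : ℝ → ℂ := fun τ => ((β / Real.pi : ℝ) : ℂ) *
      Complex.sinh ((Real.pi : ℂ) * ((ε : ℂ) - Complex.I * τ) / (β : ℂ)) with hzdef
  have hbase : ∀ τ : ℝ,
      (((β / Real.pi : ℝ) : ℂ) * Complex.sinh ((Real.pi : ℂ) * ((ε : ℂ) + Complex.I * τ) / (β : ℂ)))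
        = (starRingEnd ℂ) (z τ) := by
    intro τ
    rw [hzdef]
    simp only [map_mul, ← Complex.sinh_conj, Complex.conj_ofReal]
    congr 2
    simp only [map_div₀, map_mul, map_sub, Complex.conj_ofReal, Complex.conj_I]
    ring
  have hz : ∀ τ : ℝ, z τ
      = ((β / Real.pi * (Real.sinh (Real.pi * ε / β) * Real.cos (Real.pi * τ / β)) : ℝ) : ℂ)
        + ((-(β / Real.pi * (Real.cosh (Real.pi * ε / β) * Real.sin (Real.pi * τ / β))) : ℝ) : ℂ)
          * Complex.I := by
    intro τ
    have harg : (Real.pi : ℂ) * ((ε : ℂ) - Complex.I * τ) / (β : ℂ)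
        = ((Real.pi * ε / β : ℝ) : ℂ) + ((-(Real.pi * τ / β) : ℝ) : ℂ) * Complex.I := by
      have hβ' : (β : ℂ) ≠ 0 := Complex.ofReal_ne_zero.2 hβ.ne'
      push_cast
      ring
    show ((β / Real.pi : ℝ) : ℂ) * Complex.sinh ((Real.pi : ℂ) * ((ε : ℂ) - Complex.I * τ) / (β : ℂ)) = _
    rw [harg, Complex.sinh_add, Complex.sinh_mul_I, Complex.cosh_mul_I]
    push_cast
    simp only [Complex.cos_neg, Complex.sin_neg]
    ring
  have hre : ∀ τ : ℝ, (z τ).re = β / Real.pi * (Real.sinh (Real.pi * ε / β) * Real.cos (Real.pi * τ / β)) := by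
    intro τ
    rw [hz τ]
    simp only [Complex.add_re, Complex.mul_re, Complex.ofReal_re, Complex.ofReal_im,
      Complex.I_re, Complex.I_im]
    ring
  have him : ∀ τ : ℝ, (z τ).im = -(β / Real.pi * (Real.cosh (Real.pi * ε / β) * Real.sin (Real.pi * τ / β))) := by
    intro τ
    rw [hz τ]
    simp only [Complex.add_im, Complex.mul_im, Complex.ofReal_re, Complex.ofReal_im,
      Complex.I_re, Complex.I_im]
    ring
  have hre0 : ∀ τ : ℝ, |τ| ≤ β / 2 → 0 ≤ (z τ).re := by
    intro τ hτ
    rw [hre τ]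
    have hcos : 0 ≤ Real.cos (Real.pi * τ / β) := by
      apply Real.cos_nonneg_of_mem_Icc
      rw [abs_le] at hτ
      constructor
      · rw [neg_le, ← neg_div, div_le_iff₀ hβ]
        nlinarith [hτ.1]
      · rw [div_le_iff₀ hβ]
        nlinarith [hτ.2]
    have hsinh : 0 < Real.sinh (Real.pi * ε / β) := Real.sinh_pos_iff.2 (by positivity)
    positivity
  have hargne : ∀ τ : ℝ, |τ| ≤ β / 2 → (z τ).arg ≠ Real.pi := by
    intro τ hτ h
    rw [Complex.arg_eq_pi_iff] at h
    linarith [hre0 τ hτ, h.1]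
  have key : ∀ τ : ℝ, |τ| ≤ β / 2 →
      G τ = ((b * (z τ ^ (-(2 * Δ) : ℂ)).im / s : ℝ) : ℂ) := by
    intro τ hτ
    rw [hG τ, hbase τ]
    have hcexp : (starRingEnd ℂ) (-(2 * Δ) : ℂ) = (-(2 * Δ) : ℂ) := by
      rw [show (-(2 * Δ) : ℂ) = ((-(2 * Δ) : ℝ) : ℂ) by push_cast; ring, Complex.conj_ofReal]
    rw [show ((starRingEnd ℂ) (z τ)) ^ (-(2 * Δ) : ℂ)
        = (starRingEnd ℂ) (z τ ^ (-(2 * Δ) : ℂ)) by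
      rw [Complex.conj_cpow _ _ (hargne τ hτ), hcexp]]
    set A := z τ ^ (-(2 * Δ) : ℂ) with hA
    have hdiff : A - (starRingEnd ℂ) A = ((2 * A.im : ℝ) : ℂ) * Complex.I := by
      apply Complex.ext
      · simp
      · simp; ring
    rw [hdiff]
    have hI : Complex.I ≠ 0 := Complex.I_ne_zero
    have hs' : (s : ℂ) ≠ 0 := Complex.ofReal_ne_zero.2 hs.ne'
    field_simp
    push_cast
    ring_nf
    rw [mul_inv_cancel_right₀ hs']
  refine ⟨?_, ?_, ?_⟩
  · intro τ hτ
    rw [key τ hτ]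
    simp
  · intro τ
    have e1 : (Real.pi : ℂ) * ((ε : ℂ) - Complex.I * ((-τ : ℝ) : ℂ)) / (β : ℂ)
        = (Real.pi : ℂ) * ((ε : ℂ) + Complex.I * (τ : ℂ)) / (β : ℂ) := by push_cast; ring
    have e2 : (Real.pi : ℂ) * ((ε : ℂ) + Complex.I * ((-τ : ℝ) : ℂ)) / (β : ℂ)
        = (Real.pi : ℂ) * ((ε : ℂ) - Complex.I * (τ : ℂ)) / (β : ℂ) := by push_cast; ring
    rw [hG, hG, e1, e2]
    ring
  · intro τ h0 h2'
    have habs : |τ| ≤ β / 2 := by rw [abs_le]; constructor <;> linarith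
    rw [key τ habs, Complex.ofReal_re]
    have hz0 : z τ ≠ 0 := by
      intro h
      rcases h0.eq_or_lt with h0' | h0'
      · have hthis := hre τ
        rw [h] at hthis
        simp only [Complex.zero_re] at hthis
        rw [← h0'] at hthis
        simp only [mul_zero, zero_div, Real.cos_zero, mul_one] at hthis
        have hsinh : 0 < Real.sinh (Real.pi * ε / β) := Real.sinh_pos_iff.2 (by positivity)
        have hq : 0 < β / Real.pi := div_pos hβ hπ
        nlinarith
      · have hsin : 0 < Real.sin (Real.pi * τ / β) := by
          apply Real.sin_pos_of_pos_of_lt_pi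
          · positivity
          · rw [div_lt_iff₀ hβ]; nlinarith
        have hthis := him τ
        rw [h] at hthis
        simp only [Complex.zero_im] at hthis
        have hcosh : 0 < Real.cosh (Real.pi * ε / β) := Real.cosh_pos _
        have hq : 0 < β / Real.pi := div_pos hβ hπ
        nlinarith [mul_pos hcosh hsin]
    have hsin0 : 0 ≤ Real.sin (Real.pi * τ / β) := by
      apply Real.sin_nonneg_of_nonneg_of_le_pi
      · positivity
      · rw [div_le_iff₀ hβ]; nlinarith
    have him_le : (z τ).im ≤ 0 := by
      rw [him τ]
      have hcosh : 0 < Real.cosh (Real.pi * ε / β) := Real.cosh_pos _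
      have : 0 ≤ β / Real.pi * (Real.cosh (Real.pi * ε / β) * Real.sin (Real.pi * τ / β)) := by
        positivity
      linarith
    have hargle : (z τ).arg ≤ 0 := by
      rcases him_le.lt_or_eq with h | h
      · exact (Complex.arg_neg_iff.2 h).le
      · exact le_of_eq (Complex.arg_eq_zero_iff.2 ⟨hre0 τ habs, h⟩)
    have harg_ge : -(Real.pi / 2) ≤ (z τ).arg :=
      Complex.neg_pi_div_two_le_arg_iff.2 (Or.inl (hre0 τ habs))
    have hAim : 0 ≤ (z τ ^ (-(2 * Δ) : ℂ)).im := by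
      rw [Complex.cpow_def_of_ne_zero hz0, Complex.exp_im]
      apply mul_nonneg (Real.exp_nonneg _)
      have him' : (Complex.log (z τ) * (-(2 * Δ) : ℂ)).im = (z τ).arg * (-(2 * Δ)) := by
        simp [Complex.mul_im, Complex.log_re, Complex.log_im]
      rw [him']
      apply Real.sin_nonneg_of_nonneg_of_le_pi
      · nlinarith
      · nlinarith
    exact div_nonneg (mul_nonneg hb.le hAim) hs.le
end
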